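/- Let H_{t,v} be the t-uniform hypergraph whose vertices are vectors in [v]^{v^t} and whose edges are the t-sets {y_1,…,y_t} such that every vector in [v]^t appears as a row of the v^t × t matrix with columns y_1,…,y_t. Then there exists an optimal weighting of H_{t,v} whose support has size at most (v^t − 1)/(v − 1). -/

import Mathlib

/-- A legal weighting: nonnegative weights summing to 1. -/
def IsLegalWeighting {U : Type*} [Fintype U] (x : U → ℝ) : Prop :=
  (∀ u, 0 ≤ x u) ∧ ∑ u, x u = 1

/-- The weight polynomial of a hypergraph evaluated at a weighting. -/
def weightPoly {U : Type*} [Fintype U] (H : Finset (Finset U)) (x : U → ℝ) : ℝ :=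
  ∑ e ∈ H, ∏ u ∈ e, x u

/-- The Lagrangian of a hypergraph. -/
noncomputable def lagrangian {U : Type*} [Fintype U] (H : Finset (Finset U)) : ℝ :=
  sSup {w | ∃ x, IsLegalWeighting x ∧ weightPoly H x = w}

open Classical in
/-- The hypergraph `H_{t,v}`: vertices are vectors in `[v]^{v^t}` and edges are the
`t`-sets `{y₁,…,y_t}` such that every vector in `[v]^t` appears as a row of the
`v^t × t` matrix with columns `y₁,…,y_t`. -/
noncomputable def Htv (t v : ℕ) : Finset (Finset (Fin (v ^ t) → Fin v)) :=
  Finset.univ.filter fun e => e.card = t ∧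
    ∀ g : (Fin (v ^ t) → Fin v) → Fin v, ∃ r : Fin (v ^ t), ∀ y ∈ e, y r = g y

/-- There is an optimal weighting of `H_{t,v}` whose support has size at most
`(v^t - 1)/(v - 1)`. -/

-- sums over function spaces
lemma sumPi1 {α : Type*} [Fintype α] [DecidableEq α] {v : ℕ} (i : α)
    (F : Fin v → ℂ) (hF : ∑ a, F a = 0) :
    ∑ h : α → Fin v, F (h i) = 0 := by
  have := Equiv.sum_comp (Equiv.piSplitAt i (fun _ => Fin v)).symm
    (fun h : α → Fin v => F (h i))
  rw [← this]
  simp only [Equiv.piSplitAt_symm_apply, Fintype.sum_prod_type]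
  simp only [Finset.sum_const, nsmul_eq_mul, dite_eq_ite, if_pos rfl, dif_pos]
  rw [← Finset.mul_sum, hF, mul_zero]

lemma sumPi2 {α : Type*} [Fintype α] [DecidableEq α] {v : ℕ} {i j : α} (hij : j ≠ i)
    (F G : Fin v → ℂ) (hF : ∑ a, F a = 0) :
    ∑ h : α → Fin v, F (h i) * G (h j) = 0 := by
  have := Equiv.sum_comp (Equiv.piSplitAt i (fun _ => Fin v)).symm
    (fun h : α → Fin v => F (h i) * G (h j))
  rw [← this]
  rw [Fintype.sum_prod_type]
  have : ∀ a : Fin v, ∑ h' : {k : α // k ≠ i} → Fin v,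
      F (((Equiv.piSplitAt i (fun _ => Fin v)).symm (a, h')) i) *
      G (((Equiv.piSplitAt i (fun _ => Fin v)).symm (a, h')) j)
      = F a * ∑ h' : {k : α // k ≠ i} → Fin v, G (h' ⟨j, hij⟩) := by
    intro a
    rw [Finset.mul_sum]
    apply Finset.sum_congr rfl
    intro h' _
    simp [Equiv.piSplitAt_symm_apply, hij]
  rw [Finset.sum_congr rfl (fun a _ => this a), ← Finset.sum_mul, hF, zero_mul]

lemma sumRoot {v : ℕ} (hv : 2 ≤ v) {x : ℂ} (hxv : x ^ v = 1) (hx1 : x ≠ 1) :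
    ∑ a : Fin v, x ^ (a : ℕ) = 0 := by
  rw [Fin.sum_univ_eq_sum_range, geom_sum_eq hx1, hxv, sub_self, zero_div]

lemma edge_bij {t v : ℕ} (hv : 2 ≤ v) {e : Finset (Fin (v ^ t) → Fin v)}
    (he : e ∈ Htv t v) :
    Function.Bijective (fun (r : Fin (v ^ t)) (y : {y // y ∈ e}) => y.1 r) := by
  classical
  rw [Htv, Finset.mem_filter] at he
  obtain ⟨-, hcard, hsur⟩ := he
  rw [Fintype.bijective_iff_surjective_and_card]
  constructor
  · intro h
    obtain ⟨r, hr⟩ := hsur (fun z => if hz : z ∈ e then h ⟨z, hz⟩ else ⟨0, by omega⟩)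
    exact ⟨r, funext fun y => by simpa [y.2] using hr y.1 y.2⟩
  · simp [Fintype.card_fun, hcard]

lemma edge_sum {t v : ℕ} (hv : 2 ≤ v) {e : Finset (Fin (v ^ t) → Fin v)}
    (he : e ∈ Htv t v) (f : ({y // y ∈ e} → Fin v) → ℂ) :
    ∑ r : Fin (v ^ t), f (fun y => y.1 r) = ∑ h, f h :=
  Fintype.sum_bijective _ (edge_bij hv he) _ _ (fun _ => rfl)

lemma single_sum {t v : ℕ} (hv : 2 ≤ v) {e : Finset (Fin (v ^ t) → Fin v)}
    (he : e ∈ Htv t v) {y : Fin (v ^ t) → Fin v} (hy : y ∈ e)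
    (F : Fin v → ℂ) (hF : ∑ a, F a = 0) :
    ∑ r : Fin (v ^ t), F (y r) = 0 := by
  classical
  have := edge_sum hv he (fun h => F (h ⟨y, hy⟩))
  rw [this, sumPi1 _ F hF]

lemma pair_sum {t v : ℕ} (hv : 2 ≤ v) {e : Finset (Fin (v ^ t) → Fin v)}
    (he : e ∈ Htv t v) {y z : Fin (v ^ t) → Fin v} (hy : y ∈ e) (hz : z ∈ e)
    (hyz : y ≠ z) (F G : Fin v → ℂ) (hF : ∑ a, F a = 0) :
    ∑ r : Fin (v ^ t), F (y r) * G (z r) = 0 := by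
  classical
  have := edge_sum hv he (fun h => F (h ⟨y, hy⟩) * G (h ⟨z, hz⟩))
  rw [this, sumPi2 (by simp [Subtype.ext_iff, Ne.symm hyz]) F G hF]


noncomputable def pbVec (t v : ℕ) (ζ c : ℂ) (S : Finset (Fin (v ^ t) → Fin v)) :
    Option (↥S × Fin (v - 1)) → EuclideanSpace ℂ (Fin (v ^ t))
  | none => WithLp.toLp 2 (fun _ => c)
  | some (y, j) => WithLp.toLp 2 (fun r => c * (ζ ^ ((j : ℕ) + 1)) ^ ((y.1 r : ℕ)))

open Complex in
lemma pb_bound {t v : ℕ} (ht : 2 ≤ t) (hv : 2 ≤ v)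
    (S : Finset (Fin (v ^ t) → Fin v))
    (hco : ∀ y ∈ S, ∀ z ∈ S, y ≠ z → ∃ e ∈ Htv t v, y ∈ e ∧ z ∈ e) :
    S.card ≤ (v ^ t - 1) / (v - 1) := by
  classical
  have hv0 : (v : ℕ) ≠ 0 := by omega
  have hvt : v ≤ v ^ t := Nat.le_self_pow (by omega) v
  rcases le_or_gt S.card 1 with hS | hS
  · calc S.card ≤ 1 := hS
      _ ≤ (v ^ t - 1) / (v - 1) := by
          rw [Nat.one_le_div_iff (by omega)]; omega
  -- main case: S.card ≥ 2
  rw [Nat.le_div_iff_mul_le (by omega : 0 < v - 1)]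
  -- set up the primitive root
  set ζ : ℂ := Complex.exp (2 * Real.pi * Complex.I / v) with hζdef
  have hζ : IsPrimitiveRoot ζ v := Complex.isPrimitiveRoot_exp v hv0
  have hζv : ζ ^ v = 1 := hζ.pow_eq_one
  have hζinv : (starRingEnd ℂ) ζ = ζ⁻¹ := by
    rw [← Complex.inv_eq_conj]
    rw [hζdef]
    rw [show (2 : ℂ) * Real.pi * Complex.I / v = ((2 * Real.pi / v : ℝ) : ℂ) * Complex.I by
      push_cast; ring]
    exact Complex.norm_exp_ofReal_mul_I _
  -- key root sums
  have hpow_ne_one : ∀ m : ℕ, 0 < m → m < v → ζ ^ m ≠ 1 := by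
    intro m hm hmv h1
    have := hζ.pow_inj (by omega : m < v) (by omega : 0 < v) (by simpa using h1)
    omega
  -- a partner edge for every y in S gives single sums
  have hsingle : ∀ y ∈ S, ∀ F : Fin v → ℂ, (∑ a, F a = 0) →
      ∑ r : Fin (v ^ t), F (y r) = 0 := by
    intro y hy F hF
    obtain ⟨z, hz, hzy⟩ := Finset.exists_mem_ne hS y
    obtain ⟨e, he, hye, hze⟩ := hco y hy z hz (Ne.symm hzy)
    exact single_sum hv he hye F hF
  -- the orthonormal family
  have hNpos : 0 < v ^ t := Nat.pow_pos (by omega)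
  set c : ℂ := ((Real.sqrt (v ^ t) : ℂ))⁻¹ with hc
  have hc2 : c * c = ((v ^ t : ℕ) : ℂ)⁻¹ := by
    rw [hc, ← mul_inv, ← Complex.ofReal_mul, Real.mul_self_sqrt (by positivity)]
    simp
  have hcconj : (starRingEnd ℂ) c = c := by
    rw [hc, map_inv₀, Complex.conj_ofReal]
  have hNne : ((v ^ t : ℕ) : ℂ) ≠ 0 := Nat.cast_ne_zero.mpr hNpos.ne' 
  have hζne : ζ ≠ 0 := by
    intro h
    rw [h, zero_pow hv0] at hζv
    exact zero_ne_one hζv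
  -- basic facts about powers w = ζ^(j+1) for j : Fin (v-1)
  have hwv : ∀ j : Fin (v - 1), (ζ ^ ((j : ℕ) + 1)) ^ v = 1 := by
    intro j
    rw [← pow_mul, mul_comm, pow_mul, hζv, one_pow]
  have hwne : ∀ j : Fin (v - 1), ζ ^ ((j : ℕ) + 1) ≠ 1 := by
    intro j
    refine hpow_ne_one _ (by omega) ?_
    have := j.2
    omega
  have hwconj : ∀ j : Fin (v - 1), (starRingEnd ℂ) (ζ ^ ((j : ℕ) + 1))
      = (ζ ^ ((j : ℕ) + 1))⁻¹ := by
    intro j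
    rw [map_pow, hζinv, inv_pow]
  have hsum_inv : ∀ j : Fin (v - 1), ∑ a : Fin v, ((ζ ^ ((j : ℕ) + 1))⁻¹) ^ (a : ℕ) = 0 := by
    intro j
    refine sumRoot hv ?_ ?_
    · rw [inv_pow, hwv j, inv_one]
    · rw [ne_eq, inv_eq_one]
      exact hwne j
  have hsum_w : ∀ j : Fin (v - 1), ∑ a : Fin v, (ζ ^ ((j : ℕ) + 1)) ^ (a : ℕ) = 0 :=
    fun j => sumRoot hv (hwv j) (hwne j)
  have hsum_cross : ∀ j k : Fin (v - 1), j ≠ k →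
      ∑ a : Fin v, ((ζ ^ ((j : ℕ) + 1))⁻¹ * ζ ^ ((k : ℕ) + 1)) ^ (a : ℕ) = 0 := by
    intro j k hjk
    refine sumRoot hv ?_ ?_
    · rw [mul_pow, inv_pow, hwv j, hwv k, inv_one, one_mul]
    · intro h1
      rw [inv_mul_eq_one₀ (pow_ne_zero _ hζne)] at h1
      have hj := j.2; have hk := k.2
      have := hζ.pow_inj (by omega : (j : ℕ) + 1 < v) (by omega : (k : ℕ) + 1 < v) h1
      exact hjk (Fin.ext (by omega))
  have key : Orthonormal ℂ (pbVec t v ζ c S) := by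
    rw [orthonormal_iff_ite]
    have hdiagsum : ∑ _r : Fin (v ^ t), c * c = 1 := by
      rw [Finset.sum_const, Finset.card_univ, Fintype.card_fin, nsmul_eq_mul, hc2,
        mul_inv_cancel₀ hNne]
    rintro (_ | ⟨y, j⟩) (_ | ⟨z, k⟩)
    · -- none, none
      simp only [if_pos rfl, pbVec, PiLp.inner_apply, PiLp.toLp_apply, RCLike.inner_apply', hcconj]
      exact hdiagsum
    · -- none, some
      rw [if_neg (by simp)]
      simp only [pbVec, PiLp.inner_apply, PiLp.toLp_apply, RCLike.inner_apply', hcconj]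
      have := hsingle z.1 z.2 (fun b => c * (c * (ζ ^ ((k : ℕ) + 1)) ^ (b : ℕ)))
        (by rw [← Finset.mul_sum, ← Finset.mul_sum, hsum_w k, mul_zero, mul_zero])
      exact this
    · -- some, none
      rw [if_neg (by simp)]
      simp only [pbVec, PiLp.inner_apply, PiLp.toLp_apply, RCLike.inner_apply', map_mul, hcconj, hwconj,
        map_pow, inv_pow]
      have := hsingle y.1 y.2 (fun a => c * ((ζ ^ ((j : ℕ) + 1))⁻¹) ^ (a : ℕ) * c)
        (by
          rw [← Finset.sum_mul, ← Finset.mul_sum, hsum_inv j, mul_zero, zero_mul])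
      simpa [inv_pow] using this
    · -- some, some
      simp only [pbVec, PiLp.inner_apply, PiLp.toLp_apply, RCLike.inner_apply', map_mul, hcconj, hwconj,
        map_pow, inv_pow]
      by_cases hyz : y = z
      · subst hyz
        by_cases hjk : j = k
        · subst hjk
          rw [if_pos rfl]
          refine Eq.trans (Finset.sum_congr rfl fun r _ => ?_) hdiagsum
          rw [mul_mul_mul_comm,
            inv_mul_cancel₀ (pow_ne_zero _ (pow_ne_zero _ hζne)), mul_one]
        · rw [if_neg (by simp [hjk])]
          have := hsingle y.1 y.2
            (fun a => c * ((ζ ^ ((j : ℕ) + 1))⁻¹ * ζ ^ ((k : ℕ) + 1)) ^ (a : ℕ) * c)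
            (by rw [← Finset.sum_mul, ← Finset.mul_sum, hsum_cross j k hjk, mul_zero, zero_mul])
          refine Eq.trans (Finset.sum_congr rfl fun r _ => ?_) this
          simp only [mul_pow, inv_pow]
          ring
      · rw [if_neg (by simp [hyz])]
        have hyz' : (y.1 : Fin (v ^ t) → Fin v) ≠ z.1 := fun h => hyz (Subtype.ext h)
        obtain ⟨e, he, hye, hze⟩ := hco y.1 y.2 z.1 z.2 hyz'
        have := pair_sum hv he hye hze hyz'
          (fun a => c * ((ζ ^ ((j : ℕ) + 1))⁻¹) ^ (a : ℕ))
          (fun b => c * (ζ ^ ((k : ℕ) + 1)) ^ (b : ℕ))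
          (by rw [← Finset.mul_sum, hsum_inv j, mul_zero])
        refine Eq.trans (Finset.sum_congr rfl fun r _ => ?_) this
        simp only [inv_pow]
  have hcard := key.linearIndependent.fintype_card_le_finrank
  rw [finrank_euclideanSpace_fin] at hcard
  simp only [Fintype.card_option, Fintype.card_prod, Fintype.card_coe, Fintype.card_fin] at hcard
  omega

lemma legal_iff_stdSimplex {U : Type*} [Fintype U] (x : U → ℝ) :
    IsLegalWeighting x ↔ x ∈ stdSimplex ℝ U := Iff.rfl

lemma exists_max {U : Type*} [Fintype U] [Nonempty U] (H : Finset (Finset U)) :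
    ∃ x, IsLegalWeighting x ∧ ∀ y, IsLegalWeighting y → weightPoly H y ≤ weightPoly H x := by
  classical
  have hcont : Continuous (weightPoly H) := by
    unfold weightPoly
    exact continuous_finset_sum _ fun e _ =>
      continuous_finset_prod _ fun u _ => continuous_apply u
  have hne : (stdSimplex ℝ U).Nonempty := by
    obtain ⟨u0⟩ := ‹Nonempty U›
    refine ⟨fun u => if u = u0 then 1 else 0, fun u => ?_, by simp⟩
    dsimp only
    split_ifs <;> norm_num
  obtain ⟨x, hx, hmax⟩ := (isCompact_stdSimplex ℝ U).exists_isMaxOn hne hcont.continuousOn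
  exact ⟨x, hx, fun y hy => hmax hy⟩

lemma max_is_lagrangian {U : Type*} [Fintype U] (H : Finset (Finset U)) (x : U → ℝ)
    (hx : IsLegalWeighting x)
    (hmax : ∀ y, IsLegalWeighting y → weightPoly H y ≤ weightPoly H x) :
    weightPoly H x = lagrangian H := by
  have hgt : IsGreatest {w | ∃ y, IsLegalWeighting y ∧ weightPoly H y = w}
      (weightPoly H x) := by
    constructor
    · exact ⟨x, hx, rfl⟩
    · rintro w ⟨y, hy, rfl⟩
      exact hmax y hy
  rw [lagrangian]
  exact hgt.csSup_eq.symm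

/-- move all weight of `w` onto `u`. -/
noncomputable def move {U : Type*} [DecidableEq U] (u w : U) (x : U → ℝ) : U → ℝ :=
  fun z => if z = w then 0 else if z = u then x u + x w else x z

lemma move_sum {U : Type*} [Fintype U] [DecidableEq U] {u w : U} (huw : u ≠ w) (x : U → ℝ) :
    ∑ z, move u w x z = ∑ z, x z := by
  have h : ∀ z, move u w x z - x z
      = (if z = w then -x w else 0) + (if z = u then x w else 0) := by
    intro z
    unfold move
    split_ifs <;> simp_all <;> ring
  have h0 : ∑ z, (move u w x z - x z) = 0 := by
    rw [Finset.sum_congr rfl fun z _ => h z, Finset.sum_add_distrib,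
      Finset.sum_ite_eq' Finset.univ w (fun _ => -x w),
      Finset.sum_ite_eq' Finset.univ u (fun _ => x w)]
    simp
  rw [Finset.sum_sub_distrib] at h0
  linarith

lemma move_legal {U : Type*} [Fintype U] [DecidableEq U] {u w : U} (huw : u ≠ w) {x : U → ℝ}
    (hx : IsLegalWeighting x) : IsLegalWeighting (move u w x) := by
  constructor
  · intro z
    unfold move
    split_ifs
    · exact le_refl 0
    · exact add_nonneg (hx.1 u) (hx.1 w)
    · exact hx.1 z
  · rw [move_sum huw x, hx.2]

lemma wp_move {U : Type*} [Fintype U] [DecidableEq U] (H : Finset (Finset U)) {u w : U}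
    (huw : u ≠ w) (hno : ∀ e ∈ H, ¬(u ∈ e ∧ w ∈ e)) (x : U → ℝ) :
    weightPoly H (move u w x) = weightPoly H x + x w *
      ((∑ e ∈ H, if u ∈ e then ∏ y ∈ e.erase u, x y else 0) -
       (∑ e ∈ H, if w ∈ e then ∏ y ∈ e.erase w, x y else 0)) := by
  have hmu : move u w x u = x u + x w := by
    unfold move; rw [if_neg huw, if_pos rfl]
  have hmw : move u w x w = 0 := by
    unfold move; rw [if_pos rfl]
  have hrest : ∀ S : Finset U, u ∉ S → w ∉ S →
      ∏ y ∈ S, move u w x y = ∏ y ∈ S, x y := by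
    intro S hu hw
    refine Finset.prod_congr rfl fun y hy => ?_
    unfold move
    have hyw : y ≠ w := by rintro rfl; exact hw hy
    have hyu : y ≠ u := by rintro rfl; exact hu hy
    rw [if_neg hyw, if_neg hyu]
  have key : ∀ e ∈ H, ∏ y ∈ e, move u w x y
      = ∏ y ∈ e, x y + x w * ((if u ∈ e then ∏ y ∈ e.erase u, x y else 0)
        - (if w ∈ e then ∏ y ∈ e.erase w, x y else 0)) := by
    intro e he
    by_cases hu : u ∈ e
    · have hw : w ∉ e := fun hw => hno e he ⟨hu, hw⟩
      rw [if_pos hu, if_neg hw, ← Finset.mul_prod_erase e _ hu, ← Finset.mul_prod_erase e x hu,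
        hrest _ (Finset.notMem_erase u e) (fun h => hw (Finset.mem_of_mem_erase h)), hmu]
      ring
    · by_cases hw : w ∈ e
      · rw [if_neg hu, if_pos hw, ← Finset.mul_prod_erase e _ hw, ← Finset.mul_prod_erase e x hw,
          hrest _ (fun h => hu (Finset.mem_of_mem_erase h)) (Finset.notMem_erase w e), hmw]
        ring
      · rw [if_neg hu, if_neg hw, hrest e hu hw]
        ring
  unfold weightPoly
  rw [Finset.sum_congr rfl key, Finset.sum_add_distrib, ← Finset.mul_sum,
    Finset.sum_sub_distrib]

lemma support_move {U : Type*} [Fintype U] [DecidableEq U] {u w : U} (huw : u ≠ w) {x : U → ℝ}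
    (hpos : ∀ z, 0 ≤ x z) (hu : x u ≠ 0) :
    Function.support (move u w x) = Function.support x \ {w} := by
  ext z
  simp only [Function.mem_support, Set.mem_diff, Set.mem_singleton_iff]
  unfold move
  split_ifs with h1 h2
  · simp [h1]
  · constructor
    · intro _
      exact ⟨by rw [h2]; exact hu, h1⟩
    · intro _
      have h3 : 0 < x u := (hpos u).lt_of_ne (Ne.symm hu)
      have h4 := hpos w
      exact (by linarith : (0:ℝ) < x u + x w).ne' 
  · tauto

lemma coedge_of_min {U : Type*} [Fintype U] [DecidableEq U] (H : Finset (Finset U)) (x : U → ℝ)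
    (hx : IsLegalWeighting x)
    (hmax : ∀ y, IsLegalWeighting y → weightPoly H y ≤ weightPoly H x)
    (hmin : ∀ y, IsLegalWeighting y → weightPoly H y = weightPoly H x →
      (Function.support x).ncard ≤ (Function.support y).ncard)
    {u w : U} (hu : x u ≠ 0) (hw : x w ≠ 0) (huw : u ≠ w) :
    ∃ e ∈ H, u ∈ e ∧ w ∈ e := by
  by_contra hno
  push_neg at hno
  have hno' : ∀ e ∈ H, ¬(u ∈ e ∧ w ∈ e) := fun e he h => hno e he h.1 h.2
  have hno'' : ∀ e ∈ H, ¬(w ∈ e ∧ u ∈ e) := fun e he h => hno e he h.2 h.1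
  have h1 := hmax (move u w x) (move_legal huw hx)
  have h2 := hmax (move w u x) (move_legal huw.symm hx)
  rw [wp_move H huw hno' x] at h1
  rw [wp_move H huw.symm hno'' x] at h2
  set A := ∑ e ∈ H, if u ∈ e then ∏ y ∈ e.erase u, x y else 0 with hA
  set B := ∑ e ∈ H, if w ∈ e then ∏ y ∈ e.erase w, x y else 0 with hB
  have hxu : 0 < x u := (hx.1 u).lt_of_ne (Ne.symm hu)
  have hxw : 0 < x w := (hx.1 w).lt_of_ne (Ne.symm hw)
  have hAB : A = B := by nlinarith
  have heq : weightPoly H (move u w x) = weightPoly H x := by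
    rw [wp_move H huw hno' x, ← hA, ← hB, hAB, sub_self, mul_zero, add_zero]
  have hle := hmin (move u w x) (move_legal huw hx) heq
  rw [support_move huw hx.1 hu] at hle
  have hlt : (Function.support x \ {w}).ncard < (Function.support x).ncard :=
    Set.ncard_diff_singleton_lt_of_mem hw (Set.toFinite _)
  omega

theorem exists_optimal_weighting_small_support (t v : ℕ) (ht : 2 ≤ t) (hv : 2 ≤ v) :
    ∃ x : (Fin (v ^ t) → Fin v) → ℝ, IsLegalWeighting x ∧
      weightPoly (Htv t v) x = lagrangian (Htv t v) ∧
      (Function.support x).ncard ≤ (v ^ t - 1) / (v - 1) := by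
  classical
  have hU : Nonempty (Fin (v ^ t) → Fin v) := ⟨fun _ => ⟨0, by omega⟩⟩
  obtain ⟨x0, hx0, hmax0⟩ := exists_max (Htv t v)
  have hSne : {n : ℕ | ∃ z, IsLegalWeighting z ∧
      weightPoly (Htv t v) z = weightPoly (Htv t v) x0 ∧
      (Function.support z).ncard = n}.Nonempty := ⟨_, x0, hx0, rfl, rfl⟩
  obtain ⟨y, hy, hyL, hycard⟩ := Nat.sInf_mem hSne
  have hymax : ∀ z, IsLegalWeighting z → weightPoly (Htv t v) z ≤ weightPoly (Htv t v) y := by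
    rw [hyL]; exact hmax0
  have hymin : ∀ z, IsLegalWeighting z → weightPoly (Htv t v) z = weightPoly (Htv t v) y →
      (Function.support y).ncard ≤ (Function.support z).ncard := by
    intro z hz hze
    rw [hycard]
    exact Nat.sInf_le ⟨z, hz, by rw [hze, hyL], rfl⟩
  refine ⟨y, hy, max_is_lagrangian (Htv t v) y hy hymax, ?_⟩
  rw [Set.ncard_eq_toFinset_card' (Function.support y)]
  refine pb_bound ht hv (Function.support y).toFinset ?_
  intro a ha b hb hab
  rw [Set.mem_toFinset, Function.mem_support] at ha hb
  exact coedge_of_min (Htv t v) y hy hymax hymin ha hb hab
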